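/- (Theorem 5.9.) Assume the pair (A, b) is controllable (span{b, Ab, …, A^{n−1}b} = ℝⁿ) and A is invertible. Then the value function V₁(ξ) = inf{‖u‖₁ : u ∈ U(ξ)} is continuous on the reachable set R(T). -/

import Mathlib

open MeasureTheory

noncomputable section

/-- A control: a measurable function with `|u t| ≤ 1` a.e. on `[0, T]`. -/
def IsControl (T : ℝ) (u : ℝ → ℝ) : Prop :=
  Measurable u ∧ ∀ᵐ t ∂(volume.restrict (Set.Icc (0:ℝ) T)), |u t| ≤ 1

/-- `∫₀ᵀ e^{−As} b u(s) ds`, the endpoint map of the system `dx/dt = Ax + bu`. -/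
def steer (n : ℕ) (A : Matrix (Fin n) (Fin n) ℝ) (b : Fin n → ℝ) (T : ℝ) (u : ℝ → ℝ) :
    Fin n → ℝ :=
  ∫ s in Set.Icc (0:ℝ) T, u s • (NormedSpace.exp (-(s • A))).mulVec b

/-- `L¹` norm of a control on `[0, T]`. -/
def L1norm (T : ℝ) (u : ℝ → ℝ) : ℝ := ∫ t in Set.Icc (0:ℝ) T, |u t|

/-- The support of `u`: closure of `{t ∈ [0,T] : u t ≠ 0}`. -/
def sparseSupp (T : ℝ) (u : ℝ → ℝ) : Set ℝ :=
  closure {t ∈ Set.Icc (0:ℝ) T | u t ≠ 0}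

/-- `L⁰` "norm": Lebesgue measure of the support. -/
def L0norm (T : ℝ) (u : ℝ → ℝ) : ℝ := (volume (sparseSupp T u)).toReal

/-- Admissible controls for initial state `ξ`: controls steering `ξ` to `0` at time `T`. -/
def Adm (n : ℕ) (A : Matrix (Fin n) (Fin n) ℝ) (b : Fin n → ℝ) (T : ℝ) (ξ : Fin n → ℝ) :
    Set (ℝ → ℝ) :=
  {u | IsControl T u ∧ ξ = -(steer n A b T u)}

/-- The reachable set `R(T)`. -/
def ReachSet (n : ℕ) (A : Matrix (Fin n) (Fin n) ℝ) (b : Fin n → ℝ) (T : ℝ) :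
    Set (Fin n → ℝ) :=
  {x | ∃ u, IsControl T u ∧ x = steer n A b T u}

/-- The set `R_α`. -/
def Rset (n : ℕ) (A : Matrix (Fin n) (Fin n) ℝ) (b : Fin n → ℝ) (T α : ℝ) :
    Set (Fin n → ℝ) :=
  {x | ∃ u, IsControl T u ∧ L1norm T u ≤ α ∧ x = steer n A b T u}

/-- Value function of the `L¹`-optimal control problem. -/
def V1 (n : ℕ) (A : Matrix (Fin n) (Fin n) ℝ) (b : Fin n → ℝ) (T : ℝ) (ξ : Fin n → ℝ) : ℝ :=
  sInf (L1norm T '' Adm n A b T ξ)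

/-- Value function of the sparse (`L⁰`) optimal control problem. -/
def V0 (n : ℕ) (A : Matrix (Fin n) (Fin n) ℝ) (b : Fin n → ℝ) (T : ℝ) (ξ : Fin n → ℝ) : ℝ :=
  sInf (L0norm T '' Adm n A b T ξ)

/-- Controllability of the pair `(A, b)`: `span {b, Ab, …, A^{n−1} b} = ℝⁿ`. -/
def Controllable (n : ℕ) (A : Matrix (Fin n) (Fin n) ℝ) (b : Fin n → ℝ) : Prop :=
  Submodule.span ℝ (Set.range fun i : Fin n => (A ^ (i : ℕ)).mulVec b) = ⊤




section AuxiliaryLemmas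
open Matrix NormedSpace Filter Topology

def mker (n : ℕ) (B : Matrix (Fin n) (Fin n) ℝ) (b η : Fin n → ℝ) (k : ℕ) (t : ℝ) : ℝ :=
  η ⬝ᵥ (NormedSpace.exp (t • B) * B ^ k).mulVec b

lemma mker_hasDerivAt (B : Matrix (Fin n) (Fin n) ℝ) (b η : Fin n → ℝ) (k : ℕ) (t : ℝ) :
    HasDerivAt (mker n B b η k) (mker n B b η (k+1) t) t := by
  letI : SeminormedRing (Matrix (Fin n) (Fin n) ℝ) := Matrix.linftyOpSemiNormedRing
  letI : NormedRing (Matrix (Fin n) (Fin n) ℝ) := Matrix.linftyOpNormedRing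
  letI : NormedAlgebra ℝ (Matrix (Fin n) (Fin n) ℝ) := Matrix.linftyOpNormedAlgebra
  have hexp : HasDerivAt (fun u : ℝ => exp (u • B)) (exp (t • B) * B) t :=
    hasDerivAt_exp_smul_const B t
  set w : Fin n → ℝ := (B ^ k).mulVec b with hw
  let L : Matrix (Fin n) (Fin n) ℝ →ₗ[ℝ] ℝ :=
    { toFun := fun M => η ⬝ᵥ M.mulVec w
      map_add' := by intro M N; simp [Matrix.add_mulVec, dotProduct_add]
      map_smul' := by intro c M; simp [Matrix.smul_mulVec, dotProduct_smul] }
  have hL : HasDerivAt (fun u : ℝ => L.toContinuousLinearMap (exp (u • B)))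
      (L.toContinuousLinearMap (exp (t • B) * B)) t :=
    (L.toContinuousLinearMap.hasFDerivAt).comp_hasDerivAt t hexp
  have h1 : (fun u : ℝ => L.toContinuousLinearMap (exp (u • B))) = mker n B b η k := by
    funext u
    simp only [LinearMap.coe_toContinuousLinearMap', L, LinearMap.coe_mk, AddHom.coe_mk]
    rw [mker, hw, ← Matrix.mulVec_mulVec]
  have h2 : L.toContinuousLinearMap (exp (t • B) * B) = mker n B b η (k+1) t := by
    simp only [LinearMap.coe_toContinuousLinearMap', L, LinearMap.coe_mk, AddHom.coe_mk]
    rw [mker, hw, ← Matrix.mulVec_mulVec, ← Matrix.mulVec_mulVec, pow_succ', ← Matrix.mulVec_mulVec]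
  rw [← h1, ← h2]
  exact hL

def expv (n : ℕ) (A : Matrix (Fin n) (Fin n) ℝ) (b : Fin n → ℝ) (t : ℝ) : Fin n → ℝ :=
  (NormedSpace.exp (-(t • A))).mulVec b

lemma dot_expv {n : ℕ} (A : Matrix (Fin n) (Fin n) ℝ) (b η : Fin n → ℝ) (t : ℝ) :
    η ⬝ᵥ expv n A b t = mker n (-A) b η 0 t := by
  rw [expv, mker, pow_zero, mul_one, ← smul_neg]

lemma mker_continuous {n : ℕ} (B : Matrix (Fin n) (Fin n) ℝ) (b η : Fin n → ℝ) (k : ℕ) :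
    Continuous (mker n B b η k) := by
  rw [continuous_iff_continuousAt]
  exact fun t => (mker_hasDerivAt B b η k t).continuousAt

lemma expv_continuous {n : ℕ} (A : Matrix (Fin n) (Fin n) ℝ) (b : Fin n → ℝ) :
    Continuous (expv n A b) := by
  apply continuous_pi
  intro i
  have h : (fun t => expv n A b t i) = mker n (-A) b (Pi.single i 1) 0 := by
    funext t
    rw [← dot_expv]
    simp [single_dotProduct]
  rw [h]
  exact mker_continuous _ _ _ _

lemma expv_bound {n : ℕ} (A : Matrix (Fin n) (Fin n) ℝ) (b : Fin n → ℝ) (T : ℝ) :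
    ∃ K : ℝ, 0 ≤ K ∧ ∀ t ∈ Set.Icc (0:ℝ) T, ‖expv n A b t‖ ≤ K := by
  obtain ⟨K, hK⟩ := (isCompact_Icc (a := (0:ℝ)) (b := T)).exists_bound_of_continuousOn
    (expv_continuous A b).continuousOn
  exact ⟨max K 0, le_max_right _ _, fun t ht => (hK t ht).trans (le_max_left _ _)⟩

lemma integrableOn_smul_expv {n : ℕ} (A : Matrix (Fin n) (Fin n) ℝ) (b : Fin n → ℝ) {T : ℝ}
    {u : ℝ → ℝ} (hu : IsControl T u) :
    IntegrableOn (fun s => u s • expv n A b s) (Set.Icc (0:ℝ) T) := by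
  obtain ⟨K, hK0, hK⟩ := expv_bound A b T
  apply Integrable.mono' (integrable_const K)
  · exact (hu.1.smul (expv_continuous A b).measurable).aestronglyMeasurable
  · filter_upwards [hu.2, ae_restrict_mem measurableSet_Icc] with t h1 h2
    rw [norm_smul]
    calc ‖u t‖ * ‖expv n A b t‖ ≤ 1 * K := by
          apply mul_le_mul h1 (hK t h2) (norm_nonneg _) zero_le_one
      _ = K := one_mul K

lemma integrableOn_abs_control {T : ℝ} {u : ℝ → ℝ} (hu : IsControl T u) :
    IntegrableOn (fun t => |u t|) (Set.Icc (0:ℝ) T) := by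
  apply Integrable.mono' (integrable_const (1:ℝ))
  · exact (hu.1.abs).aestronglyMeasurable
  · filter_upwards [hu.2] with t h1
    simpa using h1

lemma L1norm_nonneg {T : ℝ} (u : ℝ → ℝ) : 0 ≤ L1norm T u :=
  integral_nonneg (fun t => abs_nonneg _)

lemma L1norm_le_T {T : ℝ} (hT : 0 ≤ T) {u : ℝ → ℝ} (hu : IsControl T u) : L1norm T u ≤ T := by
  have : L1norm T u ≤ ∫ _ in Set.Icc (0:ℝ) T, (1:ℝ) := by
    apply integral_mono_ae (integrableOn_abs_control hu) (integrable_const 1) hu.2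
  simpa [Real.volume_Icc, hT] using this

lemma steer_add {n : ℕ} (A : Matrix (Fin n) (Fin n) ℝ) (b : Fin n → ℝ) {T : ℝ} {u v : ℝ → ℝ}
    (hu : IsControl T u) (hv : IsControl T v) :
    steer n A b T (u + v) = steer n A b T u + steer n A b T v := by
  have h : ∀ s : ℝ, (u + v) s • (NormedSpace.exp (-(s • A))).mulVec b
      = u s • expv n A b s + v s • expv n A b s := by
    intro s; rw [Pi.add_apply, add_smul]; rfl
  rw [steer]
  simp_rw [h]
  rw [integral_add (integrableOn_smul_expv A b hu) (integrableOn_smul_expv A b hv)]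
  rfl

lemma steer_neg {n : ℕ} (A : Matrix (Fin n) (Fin n) ℝ) (b : Fin n → ℝ) (T : ℝ) (u : ℝ → ℝ) :
    steer n A b T (-u) = -steer n A b T u := by
  rw [steer, steer, ← integral_neg]
  congr 1; funext s; simp [neg_smul]

lemma isControl_neg {T : ℝ} {u : ℝ → ℝ} (hu : IsControl T u) : IsControl T (-u) := by
  refine ⟨hu.1.neg, ?_⟩
  filter_upwards [hu.2] with t ht
  simpa using ht

lemma diff_derivedSet_countable (S : Set ℝ) : (S \ derivedSet S).Countable := by
  have hd : DiscreteTopology (↥(S \ derivedSet S)) := by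
    rw [discreteTopology_subtype_iff]
    intro x hx
    have hnot : ¬ AccPt x (𝓟 S) := hx.2
    rw [AccPt, Filter.not_neBot] at hnot
    refine le_bot_iff.mp ?_
    calc 𝓝[≠] x ⊓ 𝓟 (S \ derivedSet S) ≤ 𝓝[≠] x ⊓ 𝓟 S :=
          inf_le_inf_left _ (Filter.principal_mono.mpr Set.diff_subset)
      _ = ⊥ := hnot
  have : Countable (↥(S \ derivedSet S)) := TopologicalSpace.separableSpace_iff_countable.mp inferInstance
  exact Set.countable_coe_iff.mpr this

lemma mker_succ_zero_of_acc {n : ℕ} {B : Matrix (Fin n) (Fin n) ℝ} {b η : Fin n → ℝ} {k : ℕ}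
    {S : Set ℝ} (hS : ∀ y ∈ S, mker n B b η k y = 0) {x : ℝ} (hx : x ∈ S)
    (hacc : AccPt x (𝓟 S)) : mker n B b η (k+1) x = 0 := by
  set l : Filter ℝ := 𝓝[≠] x ⊓ 𝓟 S with hl
  have hne : l.NeBot := hacc
  have h1 : Filter.Tendsto (slope (mker n B b η k) x) l (𝓝 (mker n B b η (k+1) x)) := by
    apply Filter.Tendsto.mono_left _ inf_le_left
    exact (hasDerivAt_iff_tendsto_slope).mp (mker_hasDerivAt B b η k x)
  have h2 : Filter.Tendsto (slope (mker n B b η k) x) l (𝓝 0) := by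
    apply Filter.Tendsto.congr' _ tendsto_const_nhds
    filter_upwards [Filter.inter_mem_inf Filter.univ_mem (Filter.mem_principal_self S)]
      with y hy
    rcases hy with ⟨-, hyS⟩
    rw [slope, hS y hyS, hS x hx]
    simp
  exact (tendsto_nhds_unique h2 h1).symm

lemma zeroset_null {n : ℕ} {A : Matrix (Fin n) (Fin n) ℝ} {b : Fin n → ℝ}
    (hctrb : Controllable n A b) {η : Fin n → ℝ} (hη : η ≠ 0) (T : ℝ) :
    volume {t ∈ Set.Icc (0:ℝ) T | mker n (-A) b η 0 t = 0} = 0 := by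
  classical
  by_contra hpos
  set Z : Set ℝ := {t ∈ Set.Icc (0:ℝ) T | mker n (-A) b η 0 t = 0} with hZ
  -- the decreasing sequence of sets
  set S : ℕ → Set ℝ := fun k => Nat.rec Z (fun _ Sk => Sk ∩ derivedSet Sk) k with hSdef
  have hS0 : S 0 = Z := rfl
  have hSsucc : ∀ k, S (k+1) = S k ∩ derivedSet (S k) := fun k => rfl
  have hSsub : ∀ k, S (k+1) ⊆ S k := fun k => Set.inter_subset_left
  -- each derivative vanishes on S k
  have hvan : ∀ k, ∀ x ∈ S k, mker n (-A) b η k x = 0 := by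
    intro k
    induction k with
    | zero => exact fun x hx => hx.2
    | succ k ih =>
      intro x hx
      rw [hSsucc] at hx
      exact mker_succ_zero_of_acc ih hx.1 hx.2
  -- null difference
  have hnull : ∀ k, volume (S k \ S (k+1)) = 0 := by
    intro k
    rw [hSsucc, Set.diff_self_inter]
    exact (diff_derivedSet_countable (S k)).measure_zero _
  -- Z minus the intersection is null
  have hsub : Z \ (⋂ k, S k) ⊆ ⋃ k, (S k \ S (k+1)) := by
    intro x hx
    rcases hx with ⟨hxZ, hxI⟩
    rw [Set.mem_iInter] at hxI
    push_neg at hxI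
    have hex : ∃ k, x ∉ S k := hxI
    set k0 := Nat.find hex with hk0
    have hk0spec : x ∉ S k0 := Nat.find_spec hex
    have hk0ne : k0 ≠ 0 := by
      intro h
      rw [h, hS0] at hk0spec
      exact hk0spec hxZ
    obtain ⟨k1, hk1⟩ := Nat.exists_eq_succ_of_ne_zero hk0ne
    have hmem : x ∈ S k1 := by
      by_contra hc
      exact Nat.find_min hex (by omega : k1 < k0) hc
    refine Set.mem_iUnion.mpr ⟨k1, hmem, ?_⟩
    rw [← Nat.succ_eq_add_one, ← hk1]
    exact hk0spec
  have hdiffnull : volume (Z \ ⋂ k, S k) = 0 :=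
    measure_mono_null hsub (measure_iUnion_null hnull)
  -- the intersection meets Z
  have hZint : volume (Z ∩ ⋂ k, S k) ≠ 0 := by
    intro hc
    apply hpos
    have : Z ⊆ (Z \ ⋂ k, S k) ∪ (Z ∩ ⋂ k, S k) := by
      intro x hx
      by_cases h : x ∈ ⋂ k, S k
      · exact Or.inr ⟨hx, h⟩
      · exact Or.inl ⟨hx, h⟩
    refine measure_mono_null this ?_
    exact measure_union_null hdiffnull hc
  obtain ⟨t0, ht0⟩ := nonempty_of_measure_ne_zero hZint
  have htall : ∀ k, mker n (-A) b η k t0 = 0 := by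
    intro k
    apply hvan k
    exact Set.mem_iInter.mp ht0.2 k
  -- now derive a contradiction
  set M : Matrix (Fin n) (Fin n) ℝ := NormedSpace.exp (t0 • (-A)) with hM
  set ζ : Fin n → ℝ := η ᵥ* M with hζ
  have hζdot : ∀ k : ℕ, ζ ⬝ᵥ ((A ^ k).mulVec b) = 0 := by
    intro k
    have h1 : mker n (-A) b η k t0 = 0 := htall k
    rw [mker, ← Matrix.mulVec_mulVec, Matrix.dotProduct_mulVec, ← hM, ← hζ] at h1
    have hnegpow : (-A) ^ k = ((-1 : ℝ) ^ k) • A ^ k := by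
      rw [← neg_one_smul ℝ A, smul_pow]
    rw [hnegpow, Matrix.smul_mulVec, dotProduct_smul, smul_eq_mul] at h1
    rcases mul_eq_zero.mp h1 with h | h
    · exact absurd h (by positivity)
    · exact h
  have hζ0 : ζ = 0 := by
    let f : (Fin n → ℝ) →ₗ[ℝ] ℝ :=
      { toFun := fun v => ζ ⬝ᵥ v
        map_add' := fun x y => dotProduct_add ζ x y
        map_smul' := fun c x => by simp [dotProduct_smul] }
    have hker : Submodule.span ℝ (Set.range fun i : Fin n => (A ^ (i : ℕ)).mulVec b)
        ≤ LinearMap.ker f := by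
      rw [Submodule.span_le]
      rintro v ⟨i, rfl⟩
      exact hζdot (i : ℕ)
    rw [hctrb, top_le_iff] at hker
    have hall : ∀ v, ζ ⬝ᵥ v = 0 := by
      intro v
      have : v ∈ LinearMap.ker f := hker ▸ Submodule.mem_top
      exact this
    have := hall ζ
    exact (dotProduct_self_eq_zero).mp this
  -- M is invertible
  have hMunit : IsUnit M := Matrix.isUnit_exp _
  have : η = 0 := by
    have hdet : IsUnit M.det := (Matrix.isUnit_iff_isUnit_det M).mp hMunit
    have h1 : (η ᵥ* M) ᵥ* M⁻¹ = η ᵥ* (M * M⁻¹) := Matrix.vecMul_vecMul η M M⁻¹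
    rw [← hζ, hζ0, Matrix.zero_vecMul, Matrix.mul_nonsing_inv M hdet, Matrix.vecMul_one] at h1
    exact h1.symm
  exact hη this

lemma abs_dot_le {n : ℕ} (x y : Fin n → ℝ) : |x ⬝ᵥ y| ≤ (n : ℝ) * (‖x‖ * ‖y‖) := by
  calc |x ⬝ᵥ y| ≤ ∑ i, |x i * y i| := Finset.abs_sum_le_sum_abs _ _
    _ ≤ ∑ _i : Fin n, ‖x‖ * ‖y‖ := by
        apply Finset.sum_le_sum
        intro i _
        rw [abs_mul]
        have h1 : |x i| ≤ ‖x‖ := by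
          have := norm_le_pi_norm x i
          simpa [Real.norm_eq_abs] using this
        have h2 : |y i| ≤ ‖y‖ := by
          have := norm_le_pi_norm y i
          simpa [Real.norm_eq_abs] using this
        exact mul_le_mul h1 h2 (abs_nonneg _) (le_trans (abs_nonneg _) h1)
    _ = (n : ℝ) * (‖x‖ * ‖y‖) := by
        rw [Finset.sum_const, Finset.card_univ, Fintype.card_fin, nsmul_eq_mul]

lemma small_set_exists {n : ℕ} {A : Matrix (Fin n) (Fin n) ℝ} {b : Fin n → ℝ}
    (hctrb : Controllable n A b) {η : Fin n → ℝ} (hη : η ≠ 0) (T : ℝ) {ε : ℝ} (hε : 0 < ε) :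
    ∃ lam : ℝ, 0 < lam ∧
      volume {t ∈ Set.Icc (0:ℝ) T | |mker n (-A) b η 0 t| ≤ lam} ≤ ENNReal.ofReal ε := by
  set g := mker n (-A) b η 0 with hg
  set Am : ℕ → Set ℝ := fun m => {t ∈ Set.Icc (0:ℝ) T | |g t| ≤ 1/(m+1)} with hAm
  have hmeas : ∀ m, MeasurableSet (Am m) := by
    intro m
    apply measurableSet_Icc.inter
    exact measurableSet_le ((mker_continuous _ _ _ _).abs.measurable) measurable_const
  have hanti : Antitone Am := by
    intro i j hij t ht
    refine ⟨ht.1, le_trans ht.2 ?_⟩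
    apply one_div_le_one_div_of_le
    · positivity
    · have : (i : ℝ) ≤ j := by exact_mod_cast hij
      linarith
  have hfin : ∃ m, volume (Am m) ≠ ⊤ := by
    refine ⟨0, ?_⟩
    have : volume (Am 0) ≤ volume (Set.Icc (0:ℝ) T) := measure_mono (fun t ht => ht.1)
    exact (lt_of_le_of_lt this (by rw [Real.volume_Icc]; exact ENNReal.ofReal_lt_top)).ne
  have hiInter : (⋂ m, Am m) = {t ∈ Set.Icc (0:ℝ) T | g t = 0} := by
    ext t
    simp only [Set.mem_iInter, Set.mem_setOf_eq, hAm]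
    constructor
    · intro h
      refine ⟨(h 0).1, ?_⟩
      by_contra hne
      have habs : 0 < |g t| := abs_pos.mpr hne
      obtain ⟨m, hm⟩ := exists_nat_gt (1 / |g t|)
      have h2 := (h m).2
      have hmpos : (0:ℝ) < (m:ℝ) + 1 := by positivity
      have h3 : 1 / ((m:ℝ)+1) < |g t| := by
        rw [div_lt_iff₀ hmpos]
        have h4 : 1 / |g t| < (m:ℝ) + 1 := lt_of_lt_of_le hm (by linarith)
        rw [div_lt_iff₀ habs] at h4
        calc 1 < ((m:ℝ)+1) * |g t| := h4
          _ = |g t| * ((m:ℝ)+1) := mul_comm _ _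
      linarith
    · rintro ⟨h1, h2⟩ m
      refine ⟨h1, ?_⟩
      rw [h2, abs_zero]
      positivity
  have htend : Tendsto (volume ∘ Am) atTop (𝓝 (volume (⋂ m, Am m))) :=
    tendsto_measure_iInter_atTop (fun m => (hmeas m).nullMeasurableSet) hanti hfin
  rw [hiInter, zeroset_null hctrb hη T] at htend
  have hev : ∀ᶠ m in atTop, volume (Am m) < ENNReal.ofReal ε := by
    apply htend.eventually_lt_const
    simp [hε]
  obtain ⟨m, hm⟩ := hev.exists
  exact ⟨1/(m+1), by positivity, le_of_lt hm⟩

lemma uniform_lambda {n : ℕ} {A : Matrix (Fin n) (Fin n) ℝ} {b : Fin n → ℝ}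
    (hctrb : Controllable n A b) (T : ℝ) {ε : ℝ} (hε : 0 < ε) :
    ∃ lam : ℝ, 0 < lam ∧ ∀ η : Fin n → ℝ, ‖η‖ = 1 →
      volume {t ∈ Set.Icc (0:ℝ) T | |mker n (-A) b η 0 t| ≤ lam} ≤ ENNReal.ofReal ε := by
  classical
  obtain ⟨K, hK0, hK⟩ := expv_bound A b T
  set C : ℝ := (n : ℝ) * (K + 1) + 1 with hC
  have hCpos : 0 < C := by positivity
  -- the sphere
  set sph : Set (Fin n → ℝ) := Metric.sphere 0 1 with hsph
  have hcomp : IsCompact sph := isCompact_sphere 0 1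
  -- choice of lambda for each point of the sphere
  have hchoice : ∀ η : sph, ∃ lam : ℝ, 0 < lam ∧
      volume {t ∈ Set.Icc (0:ℝ) T | |mker n (-A) b (η : Fin n → ℝ) 0 t| ≤ 2 * lam}
        ≤ ENNReal.ofReal ε := by
    intro η
    have hη1 : ‖(η : Fin n → ℝ)‖ = 1 := by
      have := η.2
      simpa [mem_sphere_zero_iff_norm] using this
    have hηne : (η : Fin n → ℝ) ≠ 0 := by
      intro h
      rw [h, norm_zero] at hη1
      norm_num at hη1
    obtain ⟨lam, hlam, hle⟩ := small_set_exists hctrb hηne T hε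
    exact ⟨lam/2, by positivity, by
      convert hle using 3
      ring⟩
  choose lam hlampos hlamle using hchoice
  -- cover the sphere by balls
  set U : sph → Set (Fin n → ℝ) := fun η => Metric.ball (η : Fin n → ℝ) (lam η / C) with hU
  have hcover : sph ⊆ ⋃ η : sph, U η := by
    intro η hη
    exact Set.mem_iUnion.mpr ⟨⟨η, hη⟩, by
      simp only [U, Metric.mem_ball, dist_self]
      exact div_pos (hlampos _) hCpos⟩
  obtain ⟨F, hF⟩ := hcomp.elim_finite_subcover U (fun η => Metric.isOpen_ball) hcover
  by_cases hne : F.Nonempty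
  · set lam0 : ℝ := F.inf' hne lam with hlam0
    have hlam0pos : 0 < lam0 := by
      rw [hlam0, Finset.lt_inf'_iff]
      exact fun i _ => hlampos i
    refine ⟨lam0, hlam0pos, ?_⟩
    intro η hηnorm
    have hηsph : η ∈ sph := by simp [hsph, mem_sphere_zero_iff_norm, hηnorm]
    obtain ⟨i, hiF, hiball⟩ := Set.mem_iUnion₂.mp (hF hηsph)
    have hdist : ‖η - (i : Fin n → ℝ)‖ < lam i / C := by
      rw [← dist_eq_norm]
      exact hiball
    have hsubset : {t ∈ Set.Icc (0:ℝ) T | |mker n (-A) b η 0 t| ≤ lam0}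
        ⊆ {t ∈ Set.Icc (0:ℝ) T | |mker n (-A) b (i : Fin n → ℝ) 0 t| ≤ 2 * lam i} := by
      intro t ht
      refine ⟨ht.1, ?_⟩
      have hdiff : |mker n (-A) b (i : Fin n → ℝ) 0 t - mker n (-A) b η 0 t| ≤ lam i := by
        have heq : mker n (-A) b (i : Fin n → ℝ) 0 t - mker n (-A) b η 0 t
            = ((i : Fin n → ℝ) - η) ⬝ᵥ expv n A b t := by
          rw [sub_dotProduct, dot_expv, dot_expv]
        rw [heq]
        calc |((i : Fin n → ℝ) - η) ⬝ᵥ expv n A b t|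
            ≤ (n : ℝ) * (‖(i : Fin n → ℝ) - η‖ * ‖expv n A b t‖) := abs_dot_le _ _
          _ ≤ (n : ℝ) * ((lam i / C) * K) := by
              apply mul_le_mul_of_nonneg_left _ (Nat.cast_nonneg n)
              apply mul_le_mul _ (hK t ht.1) (norm_nonneg _) (le_of_lt (div_pos (hlampos i) hCpos))
              rw [← norm_neg, neg_sub]
              exact le_of_lt hdist
          _ ≤ lam i := by
              have hnk : (n:ℝ) * K ≤ C := by rw [hC]; nlinarith [Nat.cast_nonneg (α := ℝ) n]
              have h1 : (n : ℝ) * (lam i / C * K) = lam i * ((n:ℝ) * K / C) := by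
                ring
              rw [h1]
              have h2 : (n:ℝ) * K / C ≤ 1 := (div_le_one hCpos).mpr hnk
              calc lam i * ((n:ℝ)*K/C) ≤ lam i * 1 :=
                    mul_le_mul_of_nonneg_left h2 (le_of_lt (hlampos i))
                _ = lam i := mul_one _
      have hlam0le : lam0 ≤ lam i := Finset.inf'_le _ hiF
      calc |mker n (-A) b (i : Fin n → ℝ) 0 t|
          ≤ |mker n (-A) b η 0 t| + |mker n (-A) b (i:Fin n → ℝ) 0 t - mker n (-A) b η 0 t| := by
            have := abs_add_le (mker n (-A) b η 0 t)
              (mker n (-A) b (i:Fin n → ℝ) 0 t - mker n (-A) b η 0 t)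
            simpa using this
        _ ≤ lam0 + lam i := add_le_add ht.2 hdiff
        _ ≤ 2 * lam i := by linarith
    exact le_trans (measure_mono hsubset) (hlamle i)
  · refine ⟨1, one_pos, ?_⟩
    intro η hηnorm
    exfalso
    have hηsph : η ∈ sph := by simp [hsph, mem_sphere_zero_iff_norm, hηnorm]
    obtain ⟨i, hiF, _⟩ := Set.mem_iUnion₂.mp (hF hηsph)
    exact hne ⟨i, hiF⟩

section Gram

variable {n : ℕ} (A : Matrix (Fin n) (Fin n) ℝ) (b : Fin n → ℝ) {T : ℝ}
variable {S : Set ℝ}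

/-- Gram matrix of the restriction of `expv` to `S`. -/
def gram (n : ℕ) (A : Matrix (Fin n) (Fin n) ℝ) (b : Fin n → ℝ) (S : Set ℝ) :
    Matrix (Fin n) (Fin n) ℝ :=
  Matrix.of fun i j => ∫ t in S, expv n A b t i * expv n A b t j

lemma integrableOn_sub_Icc {E : Type*} [NormedAddCommGroup E] {f : ℝ → E}
    (hf : Continuous f) (hSsub : S ⊆ Set.Icc (0:ℝ) T) : IntegrableOn f S volume :=
  (hf.integrableOn_Icc).mono_set hSsub

lemma gram_mulVec_apply (hSsub : S ⊆ Set.Icc (0:ℝ) T) (y : Fin n → ℝ) (i : Fin n) :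
    (gram n A b S).mulVec y i = ∫ t in S, (y ⬝ᵥ expv n A b t) * expv n A b t i := by
  have hint : ∀ j : Fin n, IntegrableOn (fun t => expv n A b t i * expv n A b t j * y j)
      S volume := by
    intro j
    apply integrableOn_sub_Icc _ hSsub
    exact (((continuous_apply i).comp (expv_continuous A b)).mul
      ((continuous_apply j).comp (expv_continuous A b))).mul continuous_const
  have h1 : (gram n A b S).mulVec y i = ∑ j, (∫ t in S, expv n A b t i * expv n A b t j) * y j :=
    rfl
  rw [h1]
  have h2 : ∀ j : Fin n, (∫ t in S, expv n A b t i * expv n A b t j) * y j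
      = ∫ t in S, expv n A b t i * expv n A b t j * y j := by
    intro j
    rw [← integral_mul_const]
  simp_rw [h2]
  rw [← integral_finset_sum _ (fun j _ => hint j)]
  congr 1
  funext t
  rw [dotProduct, Finset.sum_mul]
  apply Finset.sum_congr rfl
  intro j _
  ring

lemma gram_quad (hSsub : S ⊆ Set.Icc (0:ℝ) T) (η : Fin n → ℝ) :
    η ⬝ᵥ (gram n A b S).mulVec η = ∫ t in S, (η ⬝ᵥ expv n A b t)^2 := by
  have hint : ∀ i : Fin n, IntegrableOn (fun t => η i * ((η ⬝ᵥ expv n A b t) * expv n A b t i))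
      S volume := by
    intro i
    apply integrableOn_sub_Icc _ hSsub
    apply continuous_const.mul
    apply Continuous.mul _ ((continuous_apply i).comp (expv_continuous A b))
    exact continuous_finset_sum _ fun j _ => continuous_const.mul
      ((continuous_apply j).comp (expv_continuous A b))
  have h1 : η ⬝ᵥ (gram n A b S).mulVec η = ∑ i, η i * (gram n A b S).mulVec η i := rfl
  rw [h1]
  have h2 : ∀ i : Fin n, η i * (gram n A b S).mulVec η i
      = ∫ t in S, η i * ((η ⬝ᵥ expv n A b t) * expv n A b t i) := by
    intro i
    rw [gram_mulVec_apply A b hSsub, ← integral_const_mul]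
  simp_rw [h2]
  rw [← integral_finset_sum _ (fun i _ => hint i)]
  congr 1
  funext t
  set c := η ⬝ᵥ expv n A b t with hc
  have hpt : ∀ i, η i * (c * expv n A b t i) = c * (η i * expv n A b t i) := by intro i; ring
  simp_rw [hpt]
  rw [← Finset.mul_sum]
  show c * (η ⬝ᵥ expv n A b t) = c ^ 2
  rw [← hc, pow_two]

lemma gram_solution {μ0 : ℝ} (hμ0 : 0 < μ0)
    (hquad : ∀ η : Fin n → ℝ, ‖η‖ = 1 → μ0 ≤ η ⬝ᵥ (gram n A b S).mulVec η) :
    ∀ e : Fin n → ℝ, ∃ y : Fin n → ℝ,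
      (gram n A b S).mulVec y = e ∧ ‖y‖ ≤ (n : ℝ) * ‖e‖ / μ0 := by
  set W := gram n A b S with hW
  have hscale : ∀ y : Fin n → ℝ, y ≠ 0 → μ0 * ‖y‖^2 ≤ y ⬝ᵥ W.mulVec y := by
    intro y hy
    have hny : 0 < ‖y‖ := norm_pos_iff.mpr hy
    set η := ‖y‖⁻¹ • y with hη
    have hnormη : ‖η‖ = 1 := by
      rw [hη, norm_smul, norm_inv, norm_norm, inv_mul_cancel₀ (ne_of_gt hny)]
    have hq := hquad η hnormη
    have hqη : η ⬝ᵥ W.mulVec η = ‖y‖⁻¹ * (‖y‖⁻¹ * (y ⬝ᵥ W.mulVec y)) := by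
      rw [hη, smul_dotProduct, Matrix.mulVec_smul, dotProduct_smul]
      simp [smul_eq_mul]
    rw [hqη] at hq
    have h2 : μ0 * ‖y‖^2 ≤ ‖y‖^2 * (‖y‖⁻¹ * (‖y‖⁻¹ * (y ⬝ᵥ W.mulVec y))) := by
      nlinarith [sq_nonneg ‖y‖]
    calc μ0 * ‖y‖^2 ≤ ‖y‖^2 * (‖y‖⁻¹ * (‖y‖⁻¹ * (y ⬝ᵥ W.mulVec y))) := h2
      _ = y ⬝ᵥ W.mulVec y := by
          field_simp
  have hinj : Function.Injective (Matrix.mulVecLin W) := by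
    rw [injective_iff_map_eq_zero]
    intro y hy0
    by_contra hy
    have h1 := hscale y hy
    rw [Matrix.mulVecLin_apply] at hy0
    rw [hy0] at h1
    have hny : 0 < ‖y‖ := norm_pos_iff.mpr hy
    have : y ⬝ᵥ (0 : Fin n → ℝ) = 0 := dotProduct_zero y
    rw [this] at h1
    linarith [mul_pos hμ0 (pow_pos hny 2)]
  have hsurj : Function.Surjective (Matrix.mulVecLin W) :=
    (LinearMap.injective_iff_surjective).mp hinj
  intro e
  obtain ⟨y, hy⟩ := hsurj e
  rw [Matrix.mulVecLin_apply] at hy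
  refine ⟨y, hy, ?_⟩
  by_cases hy0 : y = 0
  · rw [hy0, norm_zero]
    positivity
  · have hny : 0 < ‖y‖ := norm_pos_iff.mpr hy0
    have h1 := hscale y hy0
    rw [hy] at h1
    have h2 : y ⬝ᵥ e ≤ (n : ℝ) * (‖y‖ * ‖e‖) := le_trans (le_abs_self _) (abs_dot_le y e)
    rw [le_div_iff₀ hμ0]
    nlinarith
end Gram

lemma dot_expv_continuous {n : ℕ} (A : Matrix (Fin n) (Fin n) ℝ) (b η : Fin n → ℝ) :
    Continuous (fun t => η ⬝ᵥ expv n A b t) := by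
  apply continuous_finset_sum
  intro j _
  exact continuous_const.mul ((continuous_apply j).comp (expv_continuous A b))

set_option maxHeartbeats 1000000 in
lemma key_lemma {n : ℕ} {A : Matrix (Fin n) (Fin n) ℝ} {b : Fin n → ℝ}
    (hctrb : Controllable n A b) {T : ℝ} (hT : 0 < T) {δ : ℝ} (hδ : 0 < δ) (hδT : δ ≤ T) :
    ∃ c : ℝ, 0 < c ∧ ∀ u : ℝ → ℝ, IsControl T u → L1norm T u ≤ T - δ →
      ∀ x : Fin n → ℝ, dist x (steer n A b T u) < c → x ∈ ReachSet n A b T := by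
  classical
  set θ : ℝ := δ / (2 * T) with hθ
  have hθpos : 0 < θ := by positivity
  have hθhalf : θ ≤ 1/2 := by
    rw [hθ, div_le_iff₀ (by positivity)]
    nlinarith
  obtain ⟨lam, hlam, hlamvol⟩ := uniform_lambda hctrb T (ε := δ/4) (by positivity)
  obtain ⟨K, hK0, hK⟩ := expv_bound A b T
  set μ0 : ℝ := lam^2 * (δ/4) with hμ0def
  have hμ0 : 0 < μ0 := by positivity
  set D : ℝ := (n:ℝ)^2 * (K+1) + 1 with hD
  have hDpos : 0 < D := by positivity
  set c : ℝ := θ * μ0 / D with hc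
  have hcpos : 0 < c := by positivity
  refine ⟨c, hcpos, ?_⟩
  intro u hu hL1 x hx
  set S : Set ℝ := {t ∈ Set.Icc (0:ℝ) T | |u t| ≤ 1 - θ} with hSdef
  have hSmeas : MeasurableSet S :=
    measurableSet_Icc.inter (measurableSet_le hu.1.abs measurable_const)
  have hSsub : S ⊆ Set.Icc (0:ℝ) T := fun t ht => ht.1
  set Cmp : Set ℝ := {t ∈ Set.Icc (0:ℝ) T | 1 - θ < |u t|} with hCmp
  have hCmpmeas : MeasurableSet Cmp :=
    measurableSet_Icc.inter (measurableSet_lt measurable_const hu.1.abs)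
  have hCmpsub : Cmp ⊆ Set.Icc (0:ℝ) T := fun t ht => ht.1
  have hCmpfin : volume Cmp ≠ ⊤ := by
    refine (lt_of_le_of_lt (measure_mono hCmpsub) ?_).ne
    rw [Real.volume_Icc]; exact ENNReal.ofReal_lt_top
  have hIccfin : volume (Set.Icc (0:ℝ) T) = ENNReal.ofReal T := by
    rw [Real.volume_Icc, sub_zero]
  -- measure of the complement is small
  have hint1 : (1 - θ) * (volume Cmp).toReal ≤ ∫ t in Cmp, |u t| := by
    apply setIntegral_ge_of_const_le_real hCmpmeas hCmpfin
    · exact fun t ht => le_of_lt ht.2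
    · exact (integrableOn_abs_control hu).mono_set hCmpsub
  have hint2 : (∫ t in Cmp, |u t|) ≤ L1norm T u := by
    apply setIntegral_mono_set (integrableOn_abs_control hu)
    · exact Filter.Eventually.of_forall (fun t => abs_nonneg _)
    · exact (HasSubset.Subset.eventuallyLE hCmpsub : _)
  have h1θ : (0:ℝ) < 1 - θ := by linarith
  have hCmpReal : (volume Cmp).toReal ≤ (T - δ) / (1 - θ) := by
    rw [le_div_iff₀ h1θ]
    nlinarith [hint1, hint2, hL1]
  have hCmpvol : volume Cmp ≤ ENNReal.ofReal (T - δ/2) := by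
    have h2 : volume Cmp = ENNReal.ofReal ((volume Cmp).toReal) := by
      rw [ENNReal.ofReal_toReal hCmpfin]
    rw [h2]
    apply ENNReal.ofReal_le_ofReal
    refine le_trans hCmpReal ?_
    rw [div_le_iff₀ h1θ]
    have hθT : θ * (2 * T) = δ := by
      rw [hθ]; field_simp
    nlinarith [hθpos.le, hδ.le]
  have hScompl : S = Set.Icc (0:ℝ) T \ Cmp := by
    ext t
    constructor
    · rintro ⟨ht1, ht2⟩
      exact ⟨ht1, fun hc => absurd ht2 (not_le.mpr hc.2)⟩
    · rintro ⟨ht1, ht2⟩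
      refine ⟨ht1, ?_⟩
      by_contra hcon
      exact ht2 ⟨ht1, not_le.mp hcon⟩
  have hvolS : ENNReal.ofReal (δ/2) ≤ volume S := by
    rw [hScompl, measure_diff hCmpsub hCmpmeas.nullMeasurableSet hCmpfin, hIccfin]
    calc ENNReal.ofReal (δ/2) = ENNReal.ofReal (T - (T - δ/2)) := by norm_num
      _ = ENNReal.ofReal T - ENNReal.ofReal (T - δ/2) := by
          rw [ENNReal.ofReal_sub _ (by linarith : (0:ℝ) ≤ T - δ/2)]
      _ ≤ ENNReal.ofReal T - volume Cmp := tsub_le_tsub_left hCmpvol _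
  -- quadratic form lower bound
  have hquad : ∀ η : Fin n → ℝ, ‖η‖ = 1 → μ0 ≤ η ⬝ᵥ (gram n A b S).mulVec η := by
    intro η hη
    rw [gram_quad A b hSsub η]
    set g : ℝ → ℝ := fun t => η ⬝ᵥ expv n A b t with hg
    have hgc : Continuous g := dot_expv_continuous A b η
    set Sη : Set ℝ := S ∩ {t | lam < |g t|} with hSη
    have hSηmeas : MeasurableSet Sη := hSmeas.inter (measurableSet_lt measurable_const
      hgc.abs.measurable)
    have hSηsub : Sη ⊆ S := Set.inter_subset_left
    have hSηfin : volume Sη ≠ ⊤ := by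
      refine (lt_of_le_of_lt (measure_mono (hSηsub.trans hSsub)) ?_).ne
      rw [hIccfin]; exact ENNReal.ofReal_lt_top
    have hbad : volume {t ∈ Set.Icc (0:ℝ) T | |mker n (-A) b η 0 t| ≤ lam}
        ≤ ENNReal.ofReal (δ/4) := hlamvol η hη
    have hSsplit : S ⊆ Sη ∪ {t ∈ Set.Icc (0:ℝ) T | |mker n (-A) b η 0 t| ≤ lam} := by
      intro t ht
      by_cases hcase : lam < |g t|
      · exact Or.inl ⟨ht, hcase⟩
      · refine Or.inr ⟨ht.1, ?_⟩
        rw [← dot_expv]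
        exact not_lt.mp hcase
    have hvolSη : ENNReal.ofReal (δ/4) ≤ volume Sη := by
      have h3 : volume S ≤ volume Sη + ENNReal.ofReal (δ/4) :=
        le_trans (measure_mono hSsplit) (le_trans (measure_union_le _ _)
          (add_le_add_right hbad _))
      have h4 : ENNReal.ofReal (δ/4) + ENNReal.ofReal (δ/4) ≤ volume Sη + ENNReal.ofReal (δ/4) := by
        refine le_trans ?_ h3
        rw [← ENNReal.ofReal_add (by positivity) (by positivity)]
        refine le_trans (ENNReal.ofReal_le_ofReal ?_) hvolS
        linarith
      exact ENNReal.le_of_add_le_add_right ENNReal.ofReal_ne_top h4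
    have hSηtoReal : δ/4 ≤ (volume Sη).toReal := by
      have := ENNReal.toReal_mono hSηfin hvolSη
      rwa [ENNReal.toReal_ofReal (by positivity)] at this
    have hstep1 : lam^2 * (volume Sη).toReal ≤ ∫ t in Sη, (g t)^2 := by
      apply setIntegral_ge_of_const_le_real hSηmeas hSηfin
      · intro t ht
        have h5 : lam ≤ |g t| := le_of_lt ht.2
        calc lam^2 ≤ |g t|^2 := by nlinarith [abs_nonneg (g t)]
          _ = (g t)^2 := sq_abs _
      · exact integrableOn_sub_Icc (hgc.pow 2) (hSηsub.trans hSsub)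
    have hstep2 : (∫ t in Sη, (g t)^2) ≤ ∫ t in S, (g t)^2 := by
      apply setIntegral_mono_set (integrableOn_sub_Icc (hgc.pow 2) hSsub)
      · exact Filter.Eventually.of_forall (fun t => sq_nonneg _)
      · exact (HasSubset.Subset.eventuallyLE hSηsub : _)
    calc μ0 = lam^2 * (δ/4) := hμ0def
      _ ≤ lam^2 * (volume Sη).toReal := by nlinarith
      _ ≤ ∫ t in Sη, (g t)^2 := hstep1
      _ ≤ ∫ t in S, (g t)^2 := hstep2
  -- solve for the correction control
  set e : Fin n → ℝ := x - steer n A b T u with he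
  have hen : ‖e‖ < c := by rw [he, ← dist_eq_norm]; exact hx
  obtain ⟨y, hy, hyn⟩ := gram_solution A b hμ0 hquad e
  set v : ℝ → ℝ := S.indicator (fun t => y ⬝ᵥ expv n A b t) with hv
  have hvmeas : Measurable v := (dot_expv_continuous A b y).measurable.indicator hSmeas
  have hn2K : (n:ℝ)^2 * K ≤ D := by rw [hD]; nlinarith [sq_nonneg (n:ℝ)]
  have hvbound : ∀ t ∈ S, |y ⬝ᵥ expv n A b t| ≤ θ := by
    intro t ht
    have h1 : |y ⬝ᵥ expv n A b t| ≤ (n:ℝ) * (‖y‖ * K) := by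
      refine le_trans (abs_dot_le y _) ?_
      exact mul_le_mul_of_nonneg_left
        (mul_le_mul_of_nonneg_left (hK t (hSsub ht)) (norm_nonneg y)) (Nat.cast_nonneg n)
    have hyb : ‖y‖ * μ0 ≤ (n:ℝ) * ‖e‖ := by
      rw [← le_div_iff₀ hμ0]; exact hyn
    have heb : ‖e‖ * D ≤ θ * μ0 := by
      rw [← le_div_iff₀ hDpos]; exact le_of_lt hen
    refine le_trans h1 ?_
    have hgoal : (n:ℝ) * (‖y‖ * K) * (μ0 * D) ≤ θ * (μ0 * D) := by
      have s1 : (n:ℝ)*K*D*(‖y‖*μ0) ≤ (n:ℝ)*K*D*((n:ℝ)*‖e‖) :=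
        mul_le_mul_of_nonneg_left hyb (by positivity)
      have s2 : (n:ℝ)^2*K*(‖e‖*D) ≤ (n:ℝ)^2*K*(θ*μ0) :=
        mul_le_mul_of_nonneg_left heb (by positivity)
      have s3 : ((n:ℝ)^2*K)*(θ*μ0) ≤ D*(θ*μ0) :=
        mul_le_mul_of_nonneg_right hn2K (by positivity)
      linarith [s1, s2, s3]
    have hμD : 0 < μ0 * D := by positivity
    exact le_of_mul_le_mul_right hgoal hμD
  have hvcontrol : IsControl T v := by
    refine ⟨hvmeas, ?_⟩
    apply Filter.Eventually.of_forall
    intro t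
    rw [hv]
    by_cases ht : t ∈ S
    · rw [Set.indicator_of_mem ht]
      exact le_trans (hvbound t ht) (by linarith)
    · rw [Set.indicator_of_notMem ht]
      norm_num
  have hucontrol : IsControl T (u + v) := by
    refine ⟨hu.1.add hvmeas, ?_⟩
    filter_upwards [hu.2, ae_restrict_mem measurableSet_Icc] with t hut htIcc
    by_cases ht : t ∈ S
    · have h6 : |u t| ≤ 1 - θ := ht.2
      have h7 : |v t| ≤ θ := by
        rw [hv, Set.indicator_of_mem ht]
        exact hvbound t ht
      calc |(u + v) t| = |u t + v t| := rfl
        _ ≤ |u t| + |v t| := abs_add_le _ _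
        _ ≤ (1 - θ) + θ := add_le_add h6 h7
        _ = 1 := by ring
    · have h7 : v t = 0 := by rw [hv, Set.indicator_of_notMem ht]
      calc |(u + v) t| = |u t + v t| := rfl
        _ = |u t| := by rw [h7, add_zero]
        _ ≤ 1 := hut
  -- steer of the correction
  have hsv : steer n A b T v = (gram n A b S).mulVec y := by
    have hindic : ∀ t : ℝ, v t • expv n A b t
        = S.indicator (fun t => (y ⬝ᵥ expv n A b t) • expv n A b t) t := by
      intro t
      by_cases ht : t ∈ S
      · rw [hv, Set.indicator_of_mem ht, Set.indicator_of_mem ht]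
      · rw [hv, Set.indicator_of_notMem ht, Set.indicator_of_notMem ht, zero_smul]
    have h8 : steer n A b T v = ∫ t in S, (y ⬝ᵥ expv n A b t) • expv n A b t := by
      rw [steer]
      have h9 : ∀ s : ℝ, v s • (NormedSpace.exp (-(s • A))).mulVec b
          = S.indicator (fun t => (y ⬝ᵥ expv n A b t) • expv n A b t) s := hindic
      simp_rw [h9]
      rw [setIntegral_indicator hSmeas, Set.inter_eq_self_of_subset_right hSsub]
    rw [h8]
    funext i
    have hint : Integrable (fun t => (y ⬝ᵥ expv n A b t) • expv n A b t)
        (volume.restrict S) :=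
      integrableOn_sub_Icc ((dot_expv_continuous A b y).smul (expv_continuous A b)) hSsub
    have h10 := (ContinuousLinearMap.proj (R := ℝ) (φ := fun _ : Fin n => ℝ) i).integral_comp_comm hint
    have h11 : (∫ t in S, (y ⬝ᵥ expv n A b t) • expv n A b t) i
        = ∫ t in S, (y ⬝ᵥ expv n A b t) * expv n A b t i := by
      have h12 : (∫ t in S, (y ⬝ᵥ expv n A b t) • expv n A b t) i
          = (ContinuousLinearMap.proj (R := ℝ) (φ := fun _ : Fin n => ℝ) i)
            (∫ t in S, (y ⬝ᵥ expv n A b t) • expv n A b t) := rfl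
      rw [h12, ← h10]
      rfl
    rw [h11, ← gram_mulVec_apply A b hSsub]
  -- conclude
  refine ⟨u + v, hucontrol, ?_⟩
  rw [steer_add A b hu hvcontrol, hsv, hy, he]
  abel

section Vlayer
variable {n : ℕ} {A : Matrix (Fin n) (Fin n) ℝ} {b : Fin n → ℝ} {T : ℝ}

lemma steer_eq_integral_expv (u : ℝ → ℝ) :
    steer n A b T u = ∫ s in Set.Icc (0:ℝ) T, u s • expv n A b s := rfl

lemma isControl_combo {u w : ℝ → ℝ} (hu : IsControl T u) (hw : IsControl T w) {a c : ℝ}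
    (ha : 0 ≤ a) (hc : 0 ≤ c) (hac : a + c = 1) :
    IsControl T (fun t => a * u t + c * w t) := by
  refine ⟨(hu.1.const_mul a).add (hw.1.const_mul c), ?_⟩
  filter_upwards [hu.2, hw.2] with t h1 h2
  calc |a * u t + c * w t| ≤ |a * u t| + |c * w t| := abs_add_le _ _
    _ = a * |u t| + c * |w t| := by rw [abs_mul, abs_mul, abs_of_nonneg ha, abs_of_nonneg hc]
    _ ≤ a * 1 + c * 1 := add_le_add (mul_le_mul_of_nonneg_left h1 ha)
        (mul_le_mul_of_nonneg_left h2 hc)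
    _ = 1 := by rw [mul_one, mul_one, hac]

lemma steer_combo {u w : ℝ → ℝ} (hu : IsControl T u) (hw : IsControl T w) (a c : ℝ) :
    steer n A b T (fun t => a * u t + c * w t) = a • steer n A b T u + c • steer n A b T w := by
  rw [steer_eq_integral_expv, steer_eq_integral_expv, steer_eq_integral_expv]
  have h : ∀ s : ℝ, (a * u s + c * w s) • expv n A b s
      = a • (u s • expv n A b s) + c • (w s • expv n A b s) := by
    intro s
    rw [add_smul, mul_smul, mul_smul]
  simp_rw [h]
  have hiu : Integrable (fun s => a • (u s • expv n A b s))
      (volume.restrict (Set.Icc (0:ℝ) T)) := (integrableOn_smul_expv A b hu).smul a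
  have hiw : Integrable (fun s => c • (w s • expv n A b s))
      (volume.restrict (Set.Icc (0:ℝ) T)) := (integrableOn_smul_expv A b hw).smul c
  rw [integral_add hiu hiw, integral_smul, integral_smul]

lemma L1norm_combo {u w : ℝ → ℝ} (hu : IsControl T u) (hw : IsControl T w) {a c : ℝ}
    (ha : 0 ≤ a) (hc : 0 ≤ c) (hac : a + c = 1) :
    L1norm T (fun t => a * u t + c * w t) ≤ a * L1norm T u + c * L1norm T w := by
  have hcombo := isControl_combo hu hw ha hc hac
  have h1 : L1norm T (fun t => a * u t + c * w t)
      ≤ ∫ t in Set.Icc (0:ℝ) T, (a * |u t| + c * |w t|) := by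
    apply integral_mono (integrableOn_abs_control hcombo)
    · exact ((integrableOn_abs_control hu).const_mul a).add
        ((integrableOn_abs_control hw).const_mul c)
    · intro t
      calc |a * u t + c * w t| ≤ |a * u t| + |c * w t| := abs_add_le _ _
        _ = a * |u t| + c * |w t| := by rw [abs_mul, abs_mul, abs_of_nonneg ha, abs_of_nonneg hc]
  rw [integral_add ((integrableOn_abs_control hu).const_mul a)
    ((integrableOn_abs_control hw).const_mul c), integral_const_mul, integral_const_mul] at h1
  exact h1

lemma adm_nonempty {ξ : Fin n → ℝ} (hξ : ξ ∈ ReachSet n A b T) :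
    (Adm n A b T ξ).Nonempty := by
  obtain ⟨u, hu, rfl⟩ := hξ
  exact ⟨-u, isControl_neg hu, by rw [steer_neg, neg_neg]⟩

lemma reach_neg {ξ : Fin n → ℝ} (hξ : ξ ∈ ReachSet n A b T) : -ξ ∈ ReachSet n A b T := by
  obtain ⟨u, hu, rfl⟩ := hξ
  exact ⟨-u, isControl_neg hu, (steer_neg A b T u).symm⟩

lemma V1_bddBelow (ξ : Fin n → ℝ) : BddBelow (L1norm T '' Adm n A b T ξ) := by
  refine ⟨0, ?_⟩
  rintro r ⟨u, -, rfl⟩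
  exact L1norm_nonneg u

lemma V1_nonneg (ξ : Fin n → ℝ) : 0 ≤ V1 n A b T ξ := by
  apply Real.sInf_nonneg
  rintro r ⟨u, -, rfl⟩
  exact L1norm_nonneg u

lemma V1_le {ξ : Fin n → ℝ} {u : ℝ → ℝ} (hu : u ∈ Adm n A b T ξ) :
    V1 n A b T ξ ≤ L1norm T u :=
  csInf_le (V1_bddBelow ξ) ⟨u, hu, rfl⟩

lemma V1_le_T (hT : 0 ≤ T) {ξ : Fin n → ℝ} (hξ : ξ ∈ ReachSet n A b T) :
    V1 n A b T ξ ≤ T := by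
  obtain ⟨u, hu⟩ := adm_nonempty hξ
  exact le_trans (V1_le hu) (L1norm_le_T hT hu.1)

lemma V1_exists_lt {ξ : Fin n → ℝ} (hξ : ξ ∈ ReachSet n A b T) {r : ℝ}
    (hr : V1 n A b T ξ < r) : ∃ u ∈ Adm n A b T ξ, L1norm T u < r := by
  obtain ⟨u, hu⟩ := adm_nonempty hξ
  have hne : (L1norm T '' Adm n A b T ξ).Nonempty := ⟨L1norm T u, u, hu, rfl⟩
  obtain ⟨s, ⟨w, hw, rfl⟩, hs⟩ := exists_lt_of_csInf_lt hne hr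
  exact ⟨w, hw, hs⟩

lemma V1_combo (hT : 0 ≤ T) {ξ η : Fin n → ℝ} (hξ : ξ ∈ ReachSet n A b T)
    (hη : η ∈ ReachSet n A b T) {ε : ℝ} (hε0 : 0 ≤ ε) (hε1 : ε ≤ 1) :
    V1 n A b T ((1-ε) • ξ + ε • η) ≤ (1-ε) * V1 n A b T ξ + ε * T := by
  obtain ⟨w, hw⟩ := adm_nonempty hη
  apply le_of_forall_pos_le_add
  intro ε' hε'
  obtain ⟨u, hu, huL⟩ := V1_exists_lt hξ (lt_add_of_pos_right _ hε' :
    V1 n A b T ξ < V1 n A b T ξ + ε')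
  set z : ℝ → ℝ := fun t => (1-ε) * u t + ε * w t with hz
  have hzctl : IsControl T z := isControl_combo hu.1 hw.1 (by linarith) hε0 (by ring)
  have hzadm : z ∈ Adm n A b T ((1-ε) • ξ + ε • η) := by
    refine ⟨hzctl, ?_⟩
    rw [hz, steer_combo hu.1 hw.1, hu.2, hw.2]
    rw [smul_neg, smul_neg, neg_add]
  have h2 : L1norm T z ≤ (1-ε) * L1norm T u + ε * L1norm T w :=
    L1norm_combo hu.1 hw.1 (by linarith) hε0 (by ring)
  have h3 : L1norm T w ≤ T := L1norm_le_T hT hw.1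
  calc V1 n A b T ((1-ε) • ξ + ε • η) ≤ L1norm T z := V1_le hzadm
    _ ≤ (1-ε) * L1norm T u + ε * L1norm T w := h2
    _ ≤ (1-ε) * (V1 n A b T ξ + ε') + ε * T := by
        apply add_le_add _ (mul_le_mul_of_nonneg_left h3 hε0)
        exact mul_le_mul_of_nonneg_left (le_of_lt huL) (by linarith)
    _ ≤ (1-ε) * V1 n A b T ξ + ε * T + ε' := by nlinarith [V1_nonneg (T := T) (A := A) (b := b) ξ]

lemma ball_subset_reach {ξ : Fin n → ℝ} (hξ : ξ ∈ ReachSet n A b T) {c : ℝ}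
    (hball : ∀ x : Fin n → ℝ, dist x (-ξ) < c → x ∈ ReachSet n A b T) :
    ∀ x : Fin n → ℝ, dist x ξ < c → x ∈ ReachSet n A b T := by
  intro x hx
  have h1 : dist (-x) (-ξ) < c := by rwa [dist_neg_neg]
  have h2 := reach_neg (hball (-x) h1)
  rwa [neg_neg] at h2

lemma V1_lower {ξ : Fin n → ℝ} (hctrb : Controllable n A b) (hT : 0 < T)
    {δ : ℝ} (hδ : 0 < δ) (hδT : δ ≤ T) {c : ℝ}
    (hc : 0 < c ∧ ∀ u : ℝ → ℝ, IsControl T u → L1norm T u ≤ T - δ →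
      ∀ x : Fin n → ℝ, dist x (steer n A b T u) < c → x ∈ ReachSet n A b T)
    (hξ : ξ ∈ ReachSet n A b T) (hξni : ξ ∉ interior (ReachSet n A b T))
    {z : Fin n → ℝ} (hz : z ∈ ReachSet n A b T) (hdist : dist ξ z < c) :
    T - δ ≤ V1 n A b T z := by
  by_contra hcon
  push_neg at hcon
  obtain ⟨u, hu, huL⟩ := V1_exists_lt hz hcon
  have hsteer : steer n A b T u = -z := by
    rw [hu.2, neg_neg]
  have hball : ∀ x : Fin n → ℝ, dist x (-z) < c → x ∈ ReachSet n A b T := by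
    intro x hx
    apply hc.2 u hu.1 (le_of_lt huL) x
    rwa [hsteer]
  have hball2 := ball_subset_reach hz hball
  apply hξni
  apply mem_interior.mpr
  exact ⟨Metric.ball z c, fun x hx => hball2 x (Metric.mem_ball.mp hx),
    Metric.isOpen_ball, Metric.mem_ball.mpr hdist⟩

end Vlayer


end AuxiliaryLemmas

/-- Theorem 5.9: under controllability and invertibility of `A`,
the value function `V₁` is continuous on `R(T)`. -/
theorem V1_continuousOn (T : ℝ) (hT : 0 < T) (n : ℕ) (hn : 1 ≤ n)
    (A : Matrix (Fin n) (Fin n) ℝ) (b : Fin n → ℝ)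
    (hctrb : Controllable n A b) (hA : IsUnit A) :
    ContinuousOn (V1 n A b T) (ReachSet n A b T) := by
  intro ξ hξ
  by_cases hint : ξ ∈ interior (ReachSet n A b T)
  · -- interior case : local Lipschitz-type bound via convex combinations
    obtain ⟨r, hr, hballr⟩ := Metric.isOpen_iff.mp isOpen_interior ξ hint
    set ρ : ℝ := r / 2 with hρ
    have hρpos : 0 < ρ := by positivity
    rw [Metric.continuousWithinAt_iff]
    intro ε hε
    refine ⟨min (ρ/2) (ρ * ε / (2 * (T+1))), by positivity, ?_⟩
    intro y hy hdy
    have hdy1 : dist y ξ < ρ/2 := lt_of_lt_of_le hdy (min_le_left _ _)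
    have hdy2 : dist y ξ < ρ * ε / (2 * (T+1)) := lt_of_lt_of_le hdy (min_le_right _ _)
    by_cases hyξ : y = ξ
    · rw [hyξ]; simpa using hε
    · set s : ℝ := dist y ξ with hs
      have hspos : 0 < s := dist_pos.mpr hyξ
      have hsρ : s < ρ := lt_trans hdy1 (by linarith)
      have hsub : Metric.ball ξ r ⊆ ReachSet n A b T := hballr.trans interior_subset
      -- (i) V1 y ≤ V1 ξ + (s/ρ) T
      have hi : V1 n A b T y ≤ V1 n A b T ξ + (s/ρ) * T := by
        set η : Fin n → ℝ := ξ + (ρ/s) • (y - ξ) with hη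
        have hηmem : η ∈ ReachSet n A b T := by
          apply hsub
          rw [Metric.mem_ball, hη, dist_eq_norm]
          have : ξ + (ρ/s) • (y - ξ) - ξ = (ρ/s) • (y - ξ) := by abel
          rw [this, norm_smul, Real.norm_eq_abs, abs_of_pos (by positivity), ← dist_eq_norm]
          rw [← hs, div_mul_cancel₀ _ (ne_of_gt hspos)]
          linarith
        have hsim : (s/ρ) * (ρ/s) = 1 := by field_simp
        have hcombo : y = (1 - s/ρ) • ξ + (s/ρ) • η := by
          rw [hη, smul_add, smul_smul, hsim, one_smul]
          module
        have h0 : (0:ℝ) ≤ s/ρ := by positivity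
        have h1 : s/ρ ≤ 1 := by rw [div_le_one hρpos]; linarith
        have := V1_combo (le_of_lt hT) hξ hηmem h0 h1
        rw [← hcombo] at this
        calc V1 n A b T y ≤ (1 - s/ρ) * V1 n A b T ξ + (s/ρ) * T := this
          _ ≤ V1 n A b T ξ + (s/ρ) * T := by
              nlinarith [V1_nonneg (T := T) (A := A) (b := b) ξ, h0, h1]
      -- (ii) V1 ξ ≤ V1 y + (s/ρ) T
      have hii : V1 n A b T ξ ≤ V1 n A b T y + (s/ρ) * T := by
        set η : Fin n → ℝ := y + (ρ/s) • (ξ - y) with hη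
        have hηmem : η ∈ ReachSet n A b T := by
          apply hsub
          rw [Metric.mem_ball]
          have hd1 : dist η y = ρ := by
            rw [hη, dist_eq_norm]
            have : y + (ρ/s) • (ξ - y) - y = (ρ/s) • (ξ - y) := by abel
            rw [this, norm_smul, Real.norm_eq_abs, abs_of_pos (by positivity), ← dist_eq_norm]
            rw [dist_comm ξ y, ← hs, div_mul_cancel₀ _ (ne_of_gt hspos)]
          calc dist η ξ ≤ dist η y + dist y ξ := dist_triangle _ _ _
            _ = ρ + s := by rw [hd1, ← hs]
            _ < r := by rw [hρ] at *; linarith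
        have hymem : y ∈ ReachSet n A b T := hy
        have hsim : (s/ρ) * (ρ/s) = 1 := by field_simp
        have hcombo : ξ = (1 - s/ρ) • y + (s/ρ) • η := by
          rw [hη, smul_add, smul_smul, hsim, one_smul]
          module
        have h0 : (0:ℝ) ≤ s/ρ := by positivity
        have h1 : s/ρ ≤ 1 := by rw [div_le_one hρpos]; linarith
        have := V1_combo (le_of_lt hT) hymem hηmem h0 h1
        rw [← hcombo] at this
        calc V1 n A b T ξ ≤ (1 - s/ρ) * V1 n A b T y + (s/ρ) * T := this
          _ ≤ V1 n A b T y + (s/ρ) * T := by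
              nlinarith [V1_nonneg (T := T) (A := A) (b := b) y, h0, h1]
      have hfin : dist (V1 n A b T y) (V1 n A b T ξ) ≤ (s/ρ) * T := by
        rw [Real.dist_eq, abs_le]
        constructor <;> linarith
      refine lt_of_le_of_lt hfin ?_
      have hsT : s * T < (ρ * ε / (2 * (T+1))) * (T+1) := by
        apply mul_lt_mul' (le_of_lt hdy2) (by linarith) (le_of_lt hT) (by positivity)
      have : (ρ * ε / (2 * (T+1))) * (T+1) = ρ * ε / 2 := by
        field_simp
      rw [this] at hsT
      rw [div_mul_eq_mul_div, div_lt_iff₀ hρpos]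
      calc s * T < ρ * ε / 2 := hsT
        _ ≤ ε * ρ := by nlinarith
  · -- boundary case
    rw [Metric.continuousWithinAt_iff]
    intro ε hε
    set δ : ℝ := min (ε/2) T with hδdef
    have hδpos : 0 < δ := lt_min (by positivity) hT
    have hδT : δ ≤ T := min_le_right _ _
    obtain ⟨c, hc⟩ := key_lemma hctrb hT hδpos hδT
    refine ⟨c, hc.1, ?_⟩
    intro y hy hdy
    have hbd1 : T - δ ≤ V1 n A b T y :=
      V1_lower hctrb hT hδpos hδT hc hξ hint hy (by rwa [dist_comm] at hdy)
    have hbd2 : T - δ ≤ V1 n A b T ξ :=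
      V1_lower hctrb hT hδpos hδT hc hξ hint hξ (by simpa using hc.1)
    have hub1 : V1 n A b T y ≤ T := V1_le_T (le_of_lt hT) hy
    have hub2 : V1 n A b T ξ ≤ T := V1_le_T (le_of_lt hT) hξ
    rw [Real.dist_eq]
    have hδε : δ ≤ ε/2 := min_le_left _ _
    rw [abs_lt]
    constructor <;> nlinarith



end
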